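/- (Double centralizer theorem over arbitrary commutative rings, type A instance.) Let R be a commutative ring and let n ≥ 3. Then the centralizer in SL_n(R) of the set Γ = {1 + E_{kl} : k ≠ l, k ≠ 2, l ≠ 1} (indices 1-based) is exactly the set {ω • (1 + r • E_{12}) : ω, r ∈ R, ω^n = 1}. That is, g ∈ SL_n(R) commutes with every element of Γ if and only if g is a central scalar matrix ω·1 (with ω^n = 1) times an elementary transvection t_{12}(r). -/

import Mathlib

open Matrix

/-- Double centralizer theorem over an arbitrary commutative ring, type A instance:
`g ∈ SL_n(R)` (`n ≥ 3`) commutes with all elementary transvections `t_{kl}(1) = 1 + E_{kl}`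
with `k ≠ l`, `k ≠ 2`, `l ≠ 1` (1-based indices) if and only if `g = ω • t_{12}(r)` for
some scalar `ω` with `ω^n = 1` and some `r ∈ R`. -/
theorem double_centralizer_comm_ring_typeA {R : Type*} [CommRing R] {n : ℕ}
    (hn : 3 ≤ n) (g : Matrix.SpecialLinearGroup (Fin n) R) :
    (∀ k l : Fin n, k ≠ l → k ≠ ⟨1, by omega⟩ → l ≠ ⟨0, by omega⟩ →
      (g : Matrix (Fin n) (Fin n) R) * (1 + Matrix.single k l 1) =
        (1 + Matrix.single k l 1) * (g : Matrix (Fin n) (Fin n) R)) ↔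
    (∃ ω r : R, ω ^ n = 1 ∧
      (g : Matrix (Fin n) (Fin n) R) =
        ω • (1 + r • Matrix.single (⟨0, by omega⟩ : Fin n) (⟨1, by omega⟩ : Fin n) 1)) := by
  have h0 : (0 : ℕ) < n := by omega
  have h1 : (1 : ℕ) < n := by omega
  have h2 : (2 : ℕ) < n := by omega
  set i0 : Fin n := ⟨0, h0⟩ with hi0def
  set i1 : Fin n := ⟨1, h1⟩ with hi1def
  set i2 : Fin n := ⟨2, h2⟩ with hi2def
  have ne01 : i0 ≠ i1 := Fin.ne_of_val_ne (by norm_num)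
  have ne02 : i0 ≠ i2 := Fin.ne_of_val_ne (by norm_num)
  have ne12 : i1 ≠ i2 := Fin.ne_of_val_ne (by norm_num)
  set G : Matrix (Fin n) (Fin n) R := (g : Matrix (Fin n) (Fin n) R) with hGdef
  constructor
  · intro h
    have hE : ∀ k l : Fin n, k ≠ l → k ≠ i1 → l ≠ i0 →
        G * Matrix.single k l 1 = Matrix.single k l 1 * G := by
      intro k l hkl hk hl
      have := h k l hkl hk hl
      rw [mul_add, add_mul, mul_one, one_mul] at this
      exact add_left_cancel this
    have hEntry : ∀ k l : Fin n, k ≠ l → k ≠ i1 → l ≠ i0 → ∀ a b : Fin n,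
        (G * Matrix.single k l 1 : Matrix (Fin n) (Fin n) R) a b =
          (Matrix.single k l 1 * G : Matrix (Fin n) (Fin n) R) a b := by
      intro k l hkl hk hl a b
      rw [hE k l hkl hk hl]
    -- the diagonal entries are equal pairwise (for admissible pairs)
    have hdiag : ∀ k l : Fin n, k ≠ l → k ≠ i1 → l ≠ i0 → G k k = G l l := by
      intro k l hkl hk hl
      have := hEntry k l hkl hk hl k l
      rwa [mul_single_apply_same, single_mul_apply_same,
        mul_one, one_mul] at this
    -- off-diagonal entries vanish except possibly at (i0, i1)
    have hoff : ∀ a b : Fin n, a ≠ b → ¬(a = i0 ∧ b = i1) → G a b = 0 := by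
      intro a b hab hnot
      by_cases hb : b = i1
      · -- then a ≠ i0 (and a ≠ i1); use the pair (k, l) = (i0, a)
        subst hb
        have ha0 : a ≠ i0 := fun h' => hnot ⟨h', rfl⟩
        have := hEntry i0 a (Ne.symm ha0) ne01 ha0 i0 i1
        rw [single_mul_apply_same, one_mul,
          mul_single_apply_of_ne (hbj := Ne.symm hab)] at this
        exact this.symm
      · -- use the pair (k, l) = (b, i1)
        have := hEntry b i1 hb hb (Ne.symm ne01) a i1
        rw [mul_single_apply_same, mul_one,
          single_mul_apply_of_ne (h := hab)] at this
        exact this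
    -- all diagonal entries are equal
    have hbase : G i1 i1 = G i0 i0 := by
      have e1 : G i0 i0 = G i2 i2 := hdiag i0 i2 ne02 ne01 (Ne.symm ne02)
      have e2 : G i2 i2 = G i1 i1 := hdiag i2 i1 (Ne.symm ne12) (Ne.symm ne12) (Ne.symm ne01)
      rw [e1, e2]
    have hd : ∀ a : Fin n, G a a = G i0 i0 := by
      intro a
      by_cases ha0 : a = i0
      · rw [ha0]
      by_cases ha1 : a = i1
      · rw [ha1]; exact hbase
      · rw [hdiag a i1 ha1 ha1 (Ne.symm ne01)]; exact hbase
    set ω : R := G i0 i0 with hωdef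
    set s : R := G i0 i1 with hsdef
    -- determinant computation: G is upper triangular with ω's on the diagonal
    have htri : G.BlockTriangular id := by
      intro a b hab
      apply hoff a b (ne_of_gt hab)
      rintro ⟨ha, hb⟩
      rw [ha, hb] at hab
      exact absurd hab (by simp [hi0def, hi1def, Fin.lt_def])
    have hdet : G.det = 1 := g.2
    rw [Matrix.det_of_upperTriangular htri] at hdet
    have hω : ω ^ n = 1 := by
      rw [← hdet, Finset.prod_congr rfl (fun a _ => hd a), Finset.prod_const,
        Finset.card_univ, Fintype.card_fin]
    refine ⟨ω, ω ^ (n - 1) * s, hω, ?_⟩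
    have hωr : ω * (ω ^ (n - 1) * s) = s := by
      rw [← mul_assoc, ← pow_succ']
      have : n - 1 + 1 = n := by omega
      rw [this, hω, one_mul]
    ext a b
    rw [Matrix.smul_apply, Matrix.add_apply, Matrix.smul_apply, smul_eq_mul, smul_eq_mul]
    by_cases hab : a = b
    · subst hab
      have hE0 : Matrix.single i0 i1 (1 : R) a a = 0 := by
        apply single_apply_of_ne
        rintro ⟨h1', h2'⟩
        exact ne01 (h1'.trans h2'.symm)
      rw [hE0, Matrix.one_apply_eq, mul_zero, add_zero, mul_one]
      exact hd a
    · by_cases hab' : a = i0 ∧ b = i1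
      · obtain ⟨ha, hb⟩ := hab'
        subst ha; subst hb
        rw [single_apply_same, Matrix.one_apply_ne hab, zero_add, mul_one, hωr]
      · have hE0 : Matrix.single i0 i1 (1 : R) a b = 0 := by
          apply single_apply_of_ne
          rintro ⟨h1', h2'⟩
          exact hab' ⟨h1'.symm, h2'.symm⟩
        rw [hE0, Matrix.one_apply_ne hab, mul_zero, add_zero, mul_zero]
        exact hoff a b hab hab'
  · rintro ⟨ω, r, -, hg⟩ k l hkl hk hl
    rw [hg, smul_mul_assoc, mul_smul_comm]
    congr 1
    have e1 : Matrix.single i0 i1 (1 : R) * Matrix.single k l 1 = 0 :=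
      single_mul_single_of_ne _ _ _ _ (Ne.symm hk) _
    have e2 : Matrix.single k l (1 : R) * Matrix.single i0 i1 1 = 0 :=
      single_mul_single_of_ne _ _ _ _ hl _
    simp only [mul_add, add_mul, mul_one, one_mul, smul_mul_assoc, mul_smul_comm,
      e1, e2, smul_zero, add_zero]
    abel
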